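/- Let f be C² on an interval containing α with f(α) = 0, and let x_{n−1} ≠ x_n be points in the interval both different from α. Then the secant iterate x_{n+1} = x_n − f(x_n)(x_n − x_{n−1})/(f(x_n) − f(x_{n−1})) satisfies x_{n+1} − α = (x_n − α)(x_{n−1} − α) · f''(ζ)/(2 f'(ξ)) for some ξ strictly between x_{n−1} and x_n, and some ζ in the closed interval spanned by x_{n−1}, x_n, α, provided f(x_{n−1}) ≠ f(x_n). -/

import Mathlib

open Set

lemma secant_aux (f : ℝ → ℝ) (a b u v w : ℝ) (hf : ContDiffOn ℝ 2 f (Set.Icc a b))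
    (hu : u ∈ Set.Icc a b) (hw : w ∈ Set.Icc a b) (huv : u < v) (hvw : v < w)
    (c0 c1 c2 : ℝ)
    (h1 : f u = c0 + c1*u + c2*u^2) (h2 : f v = c0 + c1*v + c2*v^2)
    (h3 : f w = c0 + c1*w + c2*w^2) :
    ∃ ζ ∈ Set.Ioo u w, iteratedDeriv 2 f ζ = 2*c2 := by
  have hab : a < b := lt_of_le_of_lt hu.1 (lt_of_lt_of_le (huv.trans hvw) hw.2)
  have hIoo : Set.Ioo u w ⊆ Set.Ioo a b := Set.Ioo_subset_Ioo hu.1 hw.2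
  set g : ℝ → ℝ := fun t => f t - (c0 + c1*t + c2*t^2) with hg
  have hgc : ContinuousOn g (Set.Icc a b) :=
    hf.continuousOn.sub (by fun_prop)
  have hIcc : Set.Icc u w ⊆ Set.Icc a b := Set.Icc_subset_Icc hu.1 hw.2
  obtain ⟨p, hp, hp0⟩ := exists_deriv_eq_zero huv
    (hgc.mono (Set.Icc_subset_Icc hu.1 (hvw.le.trans hw.2)))
    (by simp [hg, h1, h2])
  obtain ⟨q, hq, hq0⟩ := exists_deriv_eq_zero hvw
    (hgc.mono (Set.Icc_subset_Icc (hu.1.trans huv.le) hw.2))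
    (by simp [hg, h2, h3])
  have hpq : p < q := hp.2.trans hq.1
  have hdf : ∀ t ∈ Set.Ioo a b, DifferentiableAt ℝ f t := fun t ht =>
    (hf.contDiffAt (Icc_mem_nhds ht.1 ht.2)).differentiableAt (by norm_num)
  have hlin : ∀ t : ℝ, HasDerivAt (fun s => c0 + c1*s + c2*s^2) (c1 + 2*c2*t) t := by
    intro t
    have h := (((hasDerivAt_id t).const_mul c1).const_add c0).add
      ((hasDerivAt_pow 2 t).const_mul c2)
    have : c1 + 2*c2*t = c1*1 + c2 * (↑2 * t ^ (2-1)) := by ring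
    rw [this]; exact h
  have hgd : ∀ t ∈ Set.Ioo a b, deriv g t = deriv f t - (c1 + 2*c2*t) := by
    intro t ht
    exact (((hdf t ht).hasDerivAt).sub (hlin t)).deriv
  have hdc : ContinuousOn (deriv f) (Set.Ioo a b) := by
    have h1 := hf.continuousOn_derivWithin (uniqueDiffOn_Icc hab) one_le_two
    exact (h1.mono Set.Ioo_subset_Icc_self).congr fun t ht =>
      (derivWithin_of_mem_nhds (Icc_mem_nhds ht.1 ht.2)).symm
  have hpqsub : Set.Icc p q ⊆ Set.Ioo a b := fun t ht =>
    ⟨lt_of_le_of_lt hu.1 (lt_of_lt_of_le hp.1 ht.1), lt_of_lt_of_le (lt_of_le_of_lt ht.2 hq.2) hw.2⟩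
  have hgc' : ContinuousOn (deriv g) (Set.Icc p q) := by
    have : ContinuousOn (fun t => deriv f t - (c1 + 2*c2*t)) (Set.Icc p q) :=
      (hdc.mono hpqsub).sub (by fun_prop)
    exact this.congr fun t ht => hgd t (hpqsub ht)
  obtain ⟨ζ, hζ, hζ0⟩ := exists_deriv_eq_zero hpq hgc' (hp0.trans hq0.symm)
  have hζab : ζ ∈ Set.Ioo a b := hpqsub ⟨hζ.1.le, hζ.2.le⟩
  refine ⟨ζ, ⟨hp.1.trans hζ.1, hζ.2.trans hq.2⟩, ?_⟩
  have hev : deriv g =ᶠ[nhds ζ] fun t => deriv f t - (c1 + 2*c2*t) :=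
    Filter.eventuallyEq_of_mem (isOpen_Ioo.mem_nhds hζab) hgd
  have hdfd : DifferentiableAt ℝ (deriv f) ζ := by
    have h2 : ContDiffOn ℝ 2 f (Set.Ioo a b) := hf.mono Set.Ioo_subset_Icc_self
    have h3 : ContDiffOn ℝ 1 (deriv f) (Set.Ioo a b) :=
      h2.deriv_of_isOpen isOpen_Ioo (by norm_num)
    exact (h3.differentiableOn one_ne_zero).differentiableAt (isOpen_Ioo.mem_nhds hζab)
  have hlin2 : HasDerivAt (fun t : ℝ => c1 + 2*c2*t) (2*c2) ζ := by
    simpa using ((hasDerivAt_id ζ).const_mul (2*c2)).const_add c1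
  have hkey : deriv (deriv g) ζ = deriv (deriv f) ζ - 2*c2 := by
    rw [hev.deriv_eq]
    exact (hdfd.hasDerivAt.sub hlin2).deriv
  have : deriv (deriv f) ζ = 2*c2 := by
    have := hkey.symm.trans hζ0
    linarith
  rw [show iteratedDeriv 2 f = deriv (deriv f) by
    rw [iteratedDeriv_succ, iteratedDeriv_one]]
  exact this

lemma secant_dd2 (f : ℝ → ℝ) (a b x y z : ℝ) (hf : ContDiffOn ℝ 2 f (Set.Icc a b))
    (hx : x ∈ Set.Icc a b) (hy : y ∈ Set.Icc a b) (hz : z ∈ Set.Icc a b)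
    (hxy : x ≠ y) (hyz : y ≠ z) (hxz : x ≠ z)
    (c0 c1 c2 : ℝ)
    (h1 : f x = c0 + c1*x + c2*x^2) (h2 : f y = c0 + c1*y + c2*y^2)
    (h3 : f z = c0 + c1*z + c2*z^2) :
    ∃ ζ ∈ Set.Icc (min x (min y z)) (max x (max y z)),
      iteratedDeriv 2 f ζ = 2*c2 := by
  have m1 : min x (min y z) ≤ x := min_le_left _ _
  have m2 : min x (min y z) ≤ y := le_trans (min_le_right _ _) (min_le_left _ _)
  have m3 : min x (min y z) ≤ z := le_trans (min_le_right _ _) (min_le_right _ _)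
  have M1 : x ≤ max x (max y z) := le_max_left _ _
  have M2 : y ≤ max x (max y z) := le_trans (le_max_left _ _) (le_max_right _ _)
  have M3 : z ≤ max x (max y z) := le_trans (le_max_right _ _) (le_max_right _ _)
  rcases lt_or_gt_of_ne hxy with h | h <;> rcases lt_or_gt_of_ne hyz with h' | h' <;>
    rcases lt_or_gt_of_ne hxz with h'' | h''
  · obtain ⟨ζ, hζ, he⟩ := secant_aux f a b x y z hf hx hz h h' c0 c1 c2 h1 h2 h3
    exact ⟨ζ, ⟨le_trans m1 hζ.1.le, le_trans hζ.2.le M3⟩, he⟩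
  · exact absurd (h.trans h') h''.asymm
  · obtain ⟨ζ, hζ, he⟩ := secant_aux f a b x z y hf hx hy h'' h' c0 c1 c2 h1 h3 h2
    exact ⟨ζ, ⟨le_trans m1 hζ.1.le, le_trans hζ.2.le M2⟩, he⟩
  · obtain ⟨ζ, hζ, he⟩ := secant_aux f a b z x y hf hz hy h'' h c0 c1 c2 h3 h1 h2
    exact ⟨ζ, ⟨le_trans m3 hζ.1.le, le_trans hζ.2.le M2⟩, he⟩
  · obtain ⟨ζ, hζ, he⟩ := secant_aux f a b y x z hf hy hz h h'' c0 c1 c2 h2 h1 h3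
    exact ⟨ζ, ⟨le_trans m2 hζ.1.le, le_trans hζ.2.le M3⟩, he⟩
  · obtain ⟨ζ, hζ, he⟩ := secant_aux f a b y z x hf hy hx h' h'' c0 c1 c2 h2 h3 h1
    exact ⟨ζ, ⟨le_trans m2 hζ.1.le, le_trans hζ.2.le M1⟩, he⟩
  · exact absurd (h''.trans h') h.asymm
  · obtain ⟨ζ, hζ, he⟩ := secant_aux f a b z y x hf hz hx h' h c0 c1 c2 h3 h2 h1
    exact ⟨ζ, ⟨le_trans m3 hζ.1.le, le_trans hζ.2.le M1⟩, he⟩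
theorem secant_error_relation (f : ℝ → ℝ) (a b α x y : ℝ)
    (hf : ContDiffOn ℝ 2 f (Set.Icc a b))
    (hα : α ∈ Set.Icc a b) (hx : x ∈ Set.Icc a b) (hy : y ∈ Set.Icc a b)
    (hroot : f α = 0) (hxy : x ≠ y) (hxα : x ≠ α) (hyα : y ≠ α)
    (hfxy : f x ≠ f y) :
    ∃ ξ ∈ Set.Ioo (min x y) (max x y),
      ∃ ζ ∈ Set.Icc (min x (min y α)) (max x (max y α)),
        deriv f ξ ≠ 0 ∧
        (y - f y * (y - x) / (f y - f x)) - α =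
          (y - α) * (x - α) * (iteratedDeriv 2 f ζ / (2 * deriv f ξ)) := by
  have hyx : y - x ≠ 0 := sub_ne_zero.mpr (Ne.symm hxy)
  have hαx : α - x ≠ 0 := sub_ne_zero.mpr (Ne.symm hxα)
  have hyα' : y - α ≠ 0 := sub_ne_zero.mpr hyα
  have hfyx : f y - f x ≠ 0 := sub_ne_zero.mpr (Ne.symm hfxy)
  set D1 : ℝ := (f y - f x) / (y - x) with hD1
  set D2 : ℝ := (f y / (y - α) - D1) / (α - x) with hD2
  have hD1ne : D1 ≠ 0 := div_ne_zero hfyx hyx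
  -- interpolation identities
  have hD1eq : D1 * (y - x) = f y - f x := div_mul_cancel₀ _ hyx
  have hD2eq : D2 * (α - x) * (y - α) = f y - D1 * (y - α) := by
    rw [hD2]; field_simp
  set c2 : ℝ := D2
  set c1 : ℝ := D1 - D2 * (x + y)
  set c0 : ℝ := f x - D1 * x + D2 * x * y
  have h1 : f x = c0 + c1*x + c2*x^2 := by simp only [c0, c1, c2]; ring
  have h2 : f y = c0 + c1*y + c2*y^2 := by
    simp only [c0, c1, c2]; nlinarith [hD1eq]
  have h3 : f α = c0 + c1*α + c2*α^2 := by
    simp only [c0, c1, c2]; nlinarith [hD1eq, hD2eq]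
  -- mean value theorem for D1
  have hmvt : ∃ ξ ∈ Set.Ioo (min x y) (max x y), deriv f ξ = D1 := by
    have hdf : DifferentiableOn ℝ f (Set.Ioo a b) := fun t ht =>
      ((hf.contDiffAt (Icc_mem_nhds ht.1 ht.2)).differentiableAt
        (by norm_num)).differentiableWithinAt
    rcases lt_or_gt_of_ne hxy with h | h
    · obtain ⟨ξ, hξ, he⟩ := exists_deriv_eq_slope f h
        (hf.continuousOn.mono (Set.Icc_subset_Icc hx.1 hy.2))
        (hdf.mono (Set.Ioo_subset_Ioo hx.1 hy.2))
      rw [min_eq_left h.le, max_eq_right h.le]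
      exact ⟨ξ, hξ, by rw [he, hD1]⟩
    · obtain ⟨ξ, hξ, he⟩ := exists_deriv_eq_slope f h
        (hf.continuousOn.mono (Set.Icc_subset_Icc hy.1 hx.2))
        (hdf.mono (Set.Ioo_subset_Ioo hy.1 hx.2))
      rw [min_eq_right h.le, max_eq_left h.le]
      refine ⟨ξ, hξ, ?_⟩
      rw [he, hD1]
      rw [div_eq_div_iff (sub_ne_zero.mpr hxy) hyx]
      ring
  obtain ⟨ξ, hξ, hξD⟩ := hmvt
  obtain ⟨ζ, hζ, hζe⟩ := secant_dd2 f a b x y α hf hx hy hα hxy hyα hxα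
    c0 c1 c2 h1 h2 h3
  refine ⟨ξ, hξ, ζ, hζ, ?_, ?_⟩
  · rw [hξD]; exact hD1ne
  · rw [hξD, hζe]
    have h2D1 : (2:ℝ) * D1 ≠ 0 := by positivity
    have he : (2:ℝ) * c2 / (2 * D1) = c2 / D1 := mul_div_mul_left _ _ two_ne_zero
    rw [he, hD2, hD1]
    field_simp
    ring
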